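/- Let S ⊆ {0,1}^n nonempty, P ⊆ [0,1]^n convex with finite integrality gap g, and x' ∈ dom(P) with x'_ℓ < 1. In the branching LP (maximize λ_0 + λ_1 subject to x^j ∈ λ_j·P for j = 0,1, x^0_ℓ = 0, x^1_ℓ = λ_1, x^0 + x^1 ≤ x'), the optimal value is at least 1/g. -/

import Mathlib

lemma stmt12_aux {n k : ℕ} {P : Set (Fin n → ℝ)} (hPconv : Convex ℝ P)
    (θ : Fin k → ℝ) (hθ : ∀ i, 0 ≤ θ i) (z : Fin k → Fin n → ℝ)
    (hz : ∀ i, z i ∈ P) (T : Finset (Fin k)) (g : ℝ) (hg : 0 < g) :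
    (((∑ i ∈ T, θ i) / g = 0 ∧ (fun j => (∑ i ∈ T, θ i * z i j) / g) = 0) ∨
      ∃ y ∈ P, (fun j => (∑ i ∈ T, θ i * z i j) / g) = ((∑ i ∈ T, θ i) / g) • y) := by
  set s : ℝ := ∑ i ∈ T, θ i with hs
  by_cases h0 : s = 0
  · left
    have hzero : ∀ i ∈ T, θ i = 0 := by
      intro i hi
      exact (Finset.sum_eq_zero_iff_of_nonneg (fun i _ => hθ i)).mp h0.symm.symm i hi
    constructor
    · rw [h0]; simp
    · funext j
      have : ∑ i ∈ T, θ i * z i j = 0 :=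
        Finset.sum_eq_zero (fun i hi => by rw [hzero i hi, zero_mul])
      simp [this]
  · have hspos : 0 < s := lt_of_le_of_ne (Finset.sum_nonneg (fun i _ => hθ i)) (Ne.symm h0)
    right
    refine ⟨fun j => ∑ i ∈ T, (θ i / s) * z i j, ?_, ?_⟩
    · have := hPconv.sum_mem (t := T) (w := fun i => θ i / s) (z := z)
        (fun i _ => div_nonneg (hθ i) hspos.le)
        (by rw [← Finset.sum_div, ← hs, div_self h0]) (fun i _ => hz i)
      convert this using 1
      funext j
      simp [Finset.sum_apply, Pi.smul_apply, smul_eq_mul]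
    · funext j
      simp only [Pi.smul_apply, smul_eq_mul]
      rw [Finset.mul_sum]
      rw [Finset.sum_div]
      refine Finset.sum_congr rfl (fun i hi => ?_)
      field_simp

/-- The branching LP (maximize `λ₀ + λ₁` subject to `xʲ ∈ λⱼ·P`,
`x⁰_ℓ = 0`, `x¹_ℓ = λ₁`, `x⁰ + x¹ ≤ x'`) has optimal value at least `1/g`: there is a
feasible solution with `λ₀ + λ₁ ≥ 1/g`. -/
theorem stmt12 {n : ℕ} (S P : Set (Fin n → ℝ)) (g : ℝ) (hg : 1 ≤ g)
    (hSne : S.Nonempty)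
    (hSbin : ∀ z ∈ S, ∀ i, z i = 0 ∨ z i = 1)
    (hPconv : Convex ℝ P)
    (hPbox : ∀ x ∈ P, ∀ i, 0 ≤ x i ∧ x i ≤ 1)
    (hSP : S ⊆ P)
    (hCV : ∀ x ∈ P, ∃ (k : ℕ) (θ : Fin k → ℝ) (z : Fin k → Fin n → ℝ),
      (∀ i, 0 ≤ θ i) ∧ (∑ i, θ i = 1) ∧ (∀ i, z i ∈ S) ∧
      (∀ j, ∑ i, θ i * z i j ≤ g * x j))
    (x' : Fin n → ℝ) (hx' : ∃ y ∈ P, ∀ j, y j ≤ x' j)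
    (ℓ : Fin n) (hℓ : x' ℓ < 1) :
    ∃ (lam0 lam1 : ℝ) (x0 x1 : Fin n → ℝ),
      0 ≤ lam0 ∧ 0 ≤ lam1 ∧
      ((lam0 = 0 ∧ x0 = 0) ∨ ∃ y ∈ P, x0 = lam0 • y) ∧
      ((lam1 = 0 ∧ x1 = 0) ∨ ∃ y ∈ P, x1 = lam1 • y) ∧
      x0 ℓ = 0 ∧ x1 ℓ = lam1 ∧
      (∀ j, x0 j + x1 j ≤ x' j) ∧
      1 / g ≤ lam0 + lam1 := by
  have hgpos : 0 < g := lt_of_lt_of_le one_pos hg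
  obtain ⟨y, hyP, hyx⟩ := hx'
  obtain ⟨k, θ, z, hθnn, hθsum, hzS, hzle⟩ := hCV y hyP
  set T0 : Finset (Fin k) := Finset.univ.filter (fun i => z i ℓ = 0) with hT0
  set T1 : Finset (Fin k) := Finset.univ.filter (fun i => ¬ z i ℓ = 0) with hT1
  refine ⟨(∑ i ∈ T0, θ i) / g, (∑ i ∈ T1, θ i) / g,
    fun j => (∑ i ∈ T0, θ i * z i j) / g,
    fun j => (∑ i ∈ T1, θ i * z i j) / g, ?_, ?_, ?_, ?_, ?_, ?_, ?_, ?_⟩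
  · exact div_nonneg (Finset.sum_nonneg fun i _ => hθnn i) hgpos.le
  · exact div_nonneg (Finset.sum_nonneg fun i _ => hθnn i) hgpos.le
  · exact stmt12_aux hPconv θ hθnn z (fun i => hSP (hzS i)) T0 g hgpos
  · exact stmt12_aux hPconv θ hθnn z (fun i => hSP (hzS i)) T1 g hgpos
  · have : ∑ i ∈ T0, θ i * z i ℓ = 0 := Finset.sum_eq_zero (fun i hi => by
      rw [hT0] at hi
      rw [(Finset.mem_filter.mp hi).2, mul_zero])
    simp [this]
  · have he : ∑ i ∈ T1, θ i * z i ℓ = ∑ i ∈ T1, θ i := by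
      refine Finset.sum_congr rfl (fun i hi => ?_)
      rw [hT1] at hi
      have h1 : z i ℓ = 1 := by
        rcases hSbin (z i) (hzS i) ℓ with h | h
        · exact absurd h (Finset.mem_filter.mp hi).2
        · exact h
      rw [h1, mul_one]
    show (∑ i ∈ T1, θ i * z i ℓ) / g = (∑ i ∈ T1, θ i) / g
    rw [he]
  · intro j
    rw [← add_div, Finset.sum_filter_add_sum_filter_not Finset.univ (fun i => z i ℓ = 0)
      (fun i => θ i * z i j)]
    rw [div_le_iff₀ hgpos] at *
    calc ∑ i, θ i * z i j ≤ g * y j := hzle j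
      _ ≤ g * x' j := mul_le_mul_of_nonneg_left (hyx j) hgpos.le
      _ = x' j * g := mul_comm _ _
  · rw [← add_div, Finset.sum_filter_add_sum_filter_not Finset.univ (fun i => z i ℓ = 0) θ,
      hθsum]
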